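/- arXiv:1204.1580 — 5 statements merged into one kernel-verified Lean document; each statement's English description precedes it below -/
import Mathlib

section
/- Let Ψ be an M×N matrix with integer entries all bounded in absolute value by P, and let 𝒦 be a set of K column indices such that the columns Ψ_𝒦 are linearly independent. Then λ_min(Ψ_𝒦* Ψ_𝒦) ≥ 1 / (K·M·P²)^{K−1}. -/
open scoped Matrix

/-- If `Ψ` is an `M × N` integer matrix with entries bounded in absolute value by `P`, and the
`K` columns indexed by `𝒦` are linearly independent, then every eigenvalue (in particular the
smallest) of the Gram matrix `Ψ_𝒦* Ψ_𝒦` is at least `1 / (K·M·P²)^(K-1)`. -/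
theorem stmt_6 {M N : ℕ} (K : ℕ) (Ψ : Matrix (Fin M) (Fin N) ℤ) (P : ℤ)
    (hP : ∀ i j, |Ψ i j| ≤ P) (𝒦 : Finset (Fin N)) (h𝒦 : 𝒦.card = K)
    (hind : LinearIndependent ℝ (fun j : 𝒦 => fun i : Fin M => (Ψ i j : ℝ))) :
    ∀ i : 𝒦,
      1 / ((K : ℝ) * M * (P : ℝ) ^ 2) ^ (K - 1) ≤
        (Matrix.isHermitian_conjTranspose_mul_self
          (fun i : Fin M => fun j : 𝒦 => (Ψ i j : ℝ))).eigenvalues i := by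
  intro i
  set A : Matrix (Fin M) 𝒦 ℝ := fun i : Fin M => fun j : 𝒦 => (Ψ i j : ℝ) with hAdef
  set hH := Matrix.isHermitian_conjTranspose_mul_self A with hHdef
  set μ := hH.eigenvalues with hμdef
  -- positive definiteness
  have hPD : (Aᴴ * A).PosDef := by
    refine Matrix.PosDef.of_dotProduct_mulVec_pos hH fun x hx => ?_
    have h1 : star x ⬝ᵥ ((Aᴴ * A) *ᵥ x) = (A *ᵥ x) ⬝ᵥ (A *ᵥ x) := by
      rw [← Matrix.mulVec_mulVec, Matrix.dotProduct_mulVec, Matrix.vecMul_conjTranspose,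
        star_star]
      simp [dotProduct]
    rw [h1]
    have hAx : A *ᵥ x ≠ 0 := by
      intro h0
      apply hx
      have := Fintype.linearIndependent_iff.mp hind x ?_
      · funext j; exact this j
      · funext r
        have := congrFun h0 r
        simpa [Matrix.mulVec, dotProduct, mul_comm] using this
    have := dotProduct_self_eq_zero (v := A *ᵥ x)
    have hnn : 0 ≤ (A *ᵥ x) ⬝ᵥ (A *ᵥ x) := Finset.sum_nonneg fun r _ => mul_self_nonneg _
    rcases hnn.lt_or_eq with h | h
    · exact h
    · exact absurd (dotProduct_self_eq_zero.mp h.symm) hAx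
  have hμpos : ∀ j : 𝒦, 0 < μ j := fun j => hPD.eigenvalues_pos j
  -- determinant is a positive integer hence ≥ 1
  set Gℤ : Matrix 𝒦 𝒦 ℤ := Matrix.of (fun j k : 𝒦 => ∑ r, Ψ r j * Ψ r k) with hGdef
  have hmap : Aᴴ * A = Gℤ.map (Int.cast : ℤ → ℝ) := by
    ext j k
    rw [Matrix.mul_apply]
    show ∑ r, star (A r j) * A r k = _
    simp [Matrix.mul_apply, Matrix.conjTranspose_apply, Matrix.map_apply, hGdef, hAdef]
  have hdetcast : (Aᴴ * A).det = ((Gℤ.det : ℤ) : ℝ) := by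
    rw [hmap]
    simpa using (RingHom.map_det (Int.castRingHom ℝ) Gℤ).symm
  have hdetpos : 0 < (Aᴴ * A).det := hPD.det_pos
  have hdet1 : (1 : ℝ) ≤ (Aᴴ * A).det := by
    rw [hdetcast] at hdetpos ⊢
    exact_mod_cast (by exact_mod_cast hdetpos : (0:ℤ) < Gℤ.det)
  -- determinant = product of eigenvalues
  have hdetprod : (Aᴴ * A).det = ∏ j, μ j := by
    have := hH.det_eq_prod_eigenvalues
    rw [this]; rfl
  -- trace = sum of eigenvalues
  have htr : (Aᴴ * A).trace = ∑ j, μ j := by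
    set U : Matrix 𝒦 𝒦 ℝ := (hH.eigenvectorUnitary : Matrix 𝒦 𝒦 ℝ) with hU
    have hsp := hH.spectral_theorem
    calc (Aᴴ * A).trace
        = (U * Matrix.diagonal (RCLike.ofReal ∘ μ) * (star U)).trace := by rw [hsp, Unitary.conjStarAlgAut_apply]
      _ = ((star U * U) * Matrix.diagonal (RCLike.ofReal ∘ μ)).trace := by
          rw [Matrix.trace_mul_comm, ← Matrix.mul_assoc]
      _ = ∑ j, μ j := by
          rw [Matrix.mem_unitaryGroup_iff'.mp (hH.eigenvectorUnitary).2, Matrix.one_mul]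
          simp [Matrix.trace_diagonal, Finset.univ_eq_attach]
  -- trace bound
  set T : ℝ := (K : ℝ) * M * (P : ℝ) ^ 2 with hT
  have htrbound : (Aᴴ * A).trace ≤ T := by
    have hentry : ∀ j : 𝒦, (Aᴴ * A) j j ≤ (M : ℝ) * (P : ℝ) ^ 2 := by
      intro j
      have : (Aᴴ * A) j j = ∑ r, ((Ψ r j : ℝ)) * ((Ψ r j : ℝ)) := by
        rw [Matrix.mul_apply]
        show ∑ r, star (A r j) * A r j = _
        simp [Matrix.mul_apply, Matrix.conjTranspose_apply, hAdef]
      rw [this]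
      calc ∑ r, ((Ψ r j : ℝ)) * ((Ψ r j : ℝ)) ≤ ∑ _r : Fin M, (P : ℝ) ^ 2 := by
            refine Finset.sum_le_sum fun r _ => ?_
            have h := hP r j
            have habs : |(Ψ r j : ℝ)| ≤ (P : ℝ) := by exact_mod_cast h
            nlinarith [abs_nonneg ((Ψ r j : ℝ)), sq_abs ((Ψ r j : ℝ))]
        _ = (M : ℝ) * (P : ℝ) ^ 2 := by simp [mul_comm]
    calc (Aᴴ * A).trace = ∑ j, (Aᴴ * A) j j := rfl
      _ ≤ ∑ _j : 𝒦, (M : ℝ) * (P : ℝ) ^ 2 := Finset.sum_le_sum fun j _ => hentry j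
      _ = T := by
          rw [hT]
          simp [Finset.sum_const, Fintype.card_coe, h𝒦]
          ring
  -- each eigenvalue ≤ T
  have hμle : ∀ j : 𝒦, μ j ≤ T := by
    intro j
    calc μ j ≤ ∑ j', μ j' :=
          Finset.single_le_sum (fun j' _ => (hμpos j').le) (Finset.mem_univ j)
      _ = (Aᴴ * A).trace := htr.symm
      _ ≤ T := htrbound
  have hTpos : 0 < T := lt_of_lt_of_le (hμpos i) (hμle i)
  -- combine
  have hcard : (Finset.univ.erase i).card = K - 1 := by
    rw [Finset.card_erase_of_mem (Finset.mem_univ i), Finset.card_univ, Fintype.card_coe, h𝒦]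
  have hprod_le : ∏ j ∈ Finset.univ.erase i, μ j ≤ T ^ (K - 1) := by
    calc ∏ j ∈ Finset.univ.erase i, μ j ≤ ∏ _j ∈ Finset.univ.erase i, T :=
          Finset.prod_le_prod (fun j _ => (hμpos j).le) (fun j _ => hμle j)
      _ = T ^ (K - 1) := by rw [Finset.prod_const, hcard]
  have hkey : 1 ≤ μ i * T ^ (K - 1) := by
    calc (1 : ℝ) ≤ (Aᴴ * A).det := hdet1
      _ = ∏ j, μ j := hdetprod
      _ = μ i * ∏ j ∈ Finset.univ.erase i, μ j :=
          (Finset.mul_prod_erase Finset.univ μ (Finset.mem_univ i)).symm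
      _ ≤ μ i * T ^ (K - 1) :=
          mul_le_mul_of_nonneg_left hprod_le (hμpos i).le
  rw [div_le_iff₀ (pow_pos hTpos _)]
  simpa using hkey
end

section
/- Let Ψ be an M×N integer matrix with entries bounded in absolute value by P, and let C > 0. If Spark(Ψ) > K, then the matrix Φ = (1/C)Ψ satisfies λ_min(Φ_𝒦* Φ_𝒦) ≥ 1/(C²·(KMP²)^{K−1}) for every size-K index set 𝒦. -/
open Matrix Finset

lemma my_trace_eq_sum_eigenvalues {n : Type*} [Fintype n] [DecidableEq n] {H : Matrix n n ℝ}
    (hH : H.IsHermitian) : H.trace = ∑ i, hH.eigenvalues i := by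
  simpa using hH.trace_eq_sum_eigenvalues

/-- If `Spark(Ψ) > K` (every nonzero nullspace vector of `Ψ` has more than `K` nonzero
entries), `Ψ` is an integer matrix with entries bounded by `P`, and `Φ = (1/C)Ψ` for `C > 0`,
then for every size-`K` index set `𝒦`, every eigenvalue (in particular the smallest) of
`Φ_𝒦* Φ_𝒦` is at least `1/(C²·(K·M·P²)^(K-1))`. -/
theorem stmt_7 {M N : ℕ} (K : ℕ) (Ψ : Matrix (Fin M) (Fin N) ℤ) (P : ℤ)
    (hP : ∀ i j, |Ψ i j| ≤ P) (C : ℝ) (hC : 0 < C)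
    (hspark : ∀ x : Fin N → ℝ, x ≠ 0 → (Ψ.map (Int.cast : ℤ → ℝ)).mulVec x = 0 →
      K < (Finset.univ.filter fun i => x i ≠ 0).card) :
    ∀ 𝒦 : Finset (Fin N), 𝒦.card = K →
      ∀ i : 𝒦,
        1 / (C ^ 2 * ((K : ℝ) * M * (P : ℝ) ^ 2) ^ (K - 1)) ≤
          (Matrix.isHermitian_conjTranspose_mul_self
            (fun i : Fin M => fun j : 𝒦 => (Ψ i j : ℝ) / C)).eigenvalues i := by
  intro 𝒦 h𝒦 i
  classical
  set A : Matrix (Fin M) 𝒦 ℝ := fun i : Fin M => fun j : 𝒦 => (Ψ i j : ℝ) / C with hAdef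
  have hH := Matrix.isHermitian_conjTranspose_mul_self A
  have hcard : Fintype.card 𝒦 = K := by rw [Fintype.card_coe, h𝒦]
  have hC2 : (0:ℝ) < C ^ 2 := by positivity
  -- A *ᵥ x ≠ 0 for x ≠ 0
  have hAx : ∀ x : 𝒦 → ℝ, x ≠ 0 → A *ᵥ x ≠ 0 := by
    intro x hx hzero
    set y : Fin N → ℝ := fun j => if h : j ∈ 𝒦 then x ⟨j, h⟩ else 0 with hydef
    have hy : y ≠ 0 := by
      obtain ⟨j, hj⟩ := Function.ne_iff.mp hx
      intro h0
      apply hj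
      have := congrFun h0 j.1
      simpa [hydef, j.2] using this
    have hmul : (Ψ.map (Int.cast : ℤ → ℝ)).mulVec y = 0 := by
      funext i0
      have h0 := congrFun hzero i0
      have hsum : (Ψ.map (Int.cast : ℤ → ℝ)).mulVec y i0
          = C * (A *ᵥ x) i0 := by
        simp only [Matrix.mulVec, dotProduct, Matrix.map_apply]
        rw [← Finset.sum_subset 𝒦.subset_univ (by intro j _ hj; simp [hydef, hj])]
        rw [← Finset.sum_attach 𝒦 fun j => ((Ψ i0 j : ℝ)) * y j]
        rw [Finset.mul_sum]
        refine Finset.sum_congr rfl fun j _ => ?_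
        simp only [hydef, hAdef, j.2, dif_pos]
        field_simp
      rw [hsum, h0, Pi.zero_apply, mul_zero]
    have hc := hspark y hy hmul
    have hsub : (Finset.univ.filter fun j => y j ≠ 0) ⊆ 𝒦 := by
      intro j hj
      by_contra h
      simp [hydef, h] at hj
    have := Finset.card_le_card hsub
    omega
  -- K ≥ 1 (since i : 𝒦 exists)
  have hK1 : 1 ≤ K := by
    rcases Nat.eq_zero_or_pos K with h | h
    · exfalso
      have h0 : 𝒦 = ∅ := Finset.card_eq_zero.mp (h𝒦.trans h)
      have hpos := Finset.card_pos.mpr ⟨(i : Fin N), i.2⟩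
      omega
    · exact h
  -- positive definiteness
  have hPD : Matrix.PosDef (Aᴴ * A) := by
    refine .of_dotProduct_mulVec_pos hH fun x hx => ?_
    rw [← Matrix.mulVec_mulVec, dotProduct_mulVec, Matrix.vecMul_conjTranspose, star_star]
    exact dotProduct_star_self_pos_iff.mpr (hAx x hx)
  have hμpos : ∀ j, 0 < hH.eigenvalues j := hPD.eigenvalues_pos
  -- determinant lower bound
  set Bz : Matrix (Fin M) 𝒦 ℤ := Matrix.of fun i j => Ψ i j with hBz
  set Gz : Matrix 𝒦 𝒦 ℤ := Bzᵀ * Bz with hGz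
  have hAB : A = C⁻¹ • (Bz.map (Int.cast : ℤ → ℝ)) := by
    funext i0 j
    simp [hAdef, hBz, div_eq_inv_mul]
  have hdet : (Aᴴ * A).det = (C ^ 2)⁻¹ ^ K * ((Gz.det : ℝ)) := by
    have h1 : Aᴴ * A = (C ^ 2)⁻¹ • (Gz.map (Int.cast : ℤ → ℝ)) := by
      rw [hAB]
      rw [Matrix.conjTranspose_smul, Matrix.smul_mul, Matrix.mul_smul, smul_smul]
      congr 1
      · simp [pow_two, star_trivial]
      · ext a b
        simp only [Matrix.mul_apply, Matrix.conjTranspose_apply, Matrix.transpose_apply,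
          Matrix.map_apply, star_trivial]
        rw [hGz, Matrix.mul_apply]
        push_cast
        simp [Matrix.transpose_apply]
    rw [h1, Matrix.det_smul, hcard]
    congr 1
    simpa using (RingHom.map_det (Int.castRingHom ℝ) Gz).symm
  have hdetpos : 0 < (Aᴴ * A).det := hPD.det_pos
  have hGzpos : 1 ≤ Gz.det := by
    have : (0:ℝ) < (Gz.det : ℝ) := by
      by_contra h
      push_neg at h
      have : (Aᴴ * A).det ≤ 0 := by
        rw [hdet]
        exact mul_nonpos_of_nonneg_of_nonpos (by positivity) h
      linarith
    exact_mod_cast Int.cast_pos.mp this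
  have hdetge : (C ^ 2)⁻¹ ^ K ≤ (Aᴴ * A).det := by
    rw [hdet]
    nth_rewrite 1 [← mul_one ((C ^ 2)⁻¹ ^ K)]
    have : (1:ℝ) ≤ (Gz.det : ℝ) := by exact_mod_cast hGzpos
    exact mul_le_mul_of_nonneg_left this (by positivity)
  -- trace upper bound
  have htrace : (Aᴴ * A).trace ≤ K * M * (P:ℝ)^2 / C ^ 2 := by
    have hterm : ∀ (i0 : Fin M) (j : 𝒦), star (A i0 j) * A i0 j ≤ (P:ℝ)^2 / C ^ 2 := by
      intro i0 j
      have h1 : |(Ψ i0 j : ℝ)| ≤ (P:ℝ) := by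
        have := hP i0 j
        calc |(Ψ i0 j : ℝ)| = ((|Ψ i0 j| : ℤ) : ℝ) := by push_cast; ring
        _ ≤ (P:ℝ) := by exact_mod_cast this
      have h2 : ((Ψ i0 j : ℝ))^2 ≤ (P:ℝ)^2 := by
        rw [← sq_abs]
        exact pow_le_pow_left₀ (abs_nonneg _) h1 2
      have : star (A i0 j) * A i0 j = ((Ψ i0 j : ℝ))^2 / C^2 := by
        simp [hAdef, star_trivial]
        ring
      rw [this]
      gcongr
    calc (Aᴴ * A).trace = ∑ j : 𝒦, ∑ i0 : Fin M, star (A i0 j) * A i0 j := by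
          simp [Matrix.trace, Matrix.diag, Matrix.mul_apply, Matrix.conjTranspose_apply]
      _ ≤ ∑ j : 𝒦, ∑ i0 : Fin M, (P:ℝ)^2 / C^2 :=
          Finset.sum_le_sum fun j _ => Finset.sum_le_sum fun i0 _ => hterm i0 j
      _ = K * M * (P:ℝ)^2 / C^2 := by
          simp [Finset.sum_const, Finset.card_univ, hcard, h𝒦]
          ring
  -- eigenvalue bounds
  set T : ℝ := K * M * (P:ℝ)^2 / C ^ 2 with hT
  have hsum := my_trace_eq_sum_eigenvalues hH
  have hμleT : ∀ j, hH.eigenvalues j ≤ T := by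
    intro j
    calc hH.eigenvalues j ≤ ∑ j', hH.eigenvalues j' :=
          Finset.single_le_sum (fun j' _ => (hμpos j').le) (Finset.mem_univ j)
      _ = (Aᴴ * A).trace := hsum.symm
      _ ≤ T := htrace
  have hTpos : 0 < T := lt_of_lt_of_le (hμpos i) (hμleT i)
  have hprodeq : hH.eigenvalues i * ∏ j ∈ Finset.univ.erase i, hH.eigenvalues j
      = (Aᴴ * A).det := by
    rw [hH.det_eq_prod_eigenvalues]
    simp only [RCLike.ofReal_real_eq_id, id_eq]
    rw [← Finset.mul_prod_erase Finset.univ _ (Finset.mem_univ i)]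
  have hprodle : ∏ j ∈ Finset.univ.erase i, hH.eigenvalues j ≤ T ^ (K - 1) := by
    calc ∏ j ∈ Finset.univ.erase i, hH.eigenvalues j
        ≤ ∏ _j ∈ Finset.univ.erase i, T :=
          Finset.prod_le_prod (fun j _ => (hμpos j).le) (fun j _ => hμleT j)
      _ = T ^ (K - 1) := by
          rw [Finset.prod_const, Finset.card_erase_of_mem (Finset.mem_univ i),
            Finset.card_univ, hcard]
  have hprodpos : 0 < ∏ j ∈ Finset.univ.erase i, hH.eigenvalues j :=
    Finset.prod_pos fun j _ => hμpos j
  -- final arithmetic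
  have hSpos : 0 < (K:ℝ) * M * (P:ℝ)^2 := by
    by_contra h
    push_neg at h
    have : T ≤ 0 := div_nonpos_of_nonpos_of_nonneg h hC2.le
    linarith
  have key : (C ^ 2)⁻¹ ^ K / T ^ (K - 1) ≤ hH.eigenvalues i := by
    rw [div_le_iff₀ (by positivity)]
    calc (C ^ 2)⁻¹ ^ K ≤ (Aᴴ * A).det := hdetge
      _ = hH.eigenvalues i * ∏ j ∈ Finset.univ.erase i, hH.eigenvalues j := hprodeq.symm
      _ ≤ hH.eigenvalues i * T ^ (K - 1) :=
          mul_le_mul_of_nonneg_left hprodle (hμpos i).le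
  refine le_trans (le_of_eq ?_) key
  have hpow : (C^2:ℝ)^K = (C^2)^(K-1) * C^2 := by
    rw [← pow_succ]
    congr 1
    omega
  rw [hT, inv_pow, div_pow]
  rw [div_eq_div_iff (by positivity) (by positivity), hpow]
  field_simp
end

section
/- Let Ψ be an M×N integer matrix with K ≤ M ≤ N and entries bounded in absolute value by P, and set Φ = (1/C)Ψ where C = 2^{⌈log₂(√(MN)·P)⌉}. If every K columns of Ψ are linearly independent and δ = 1 − 1/(C²·(KMP²)^{K−1}), then Φ satisfies the (K,δ)-restricted isometry property. -/
open Finset in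
/-- The `(K, δ)`-restricted isometry property for an `M × N` real matrix. -/
def RIP {M N : ℕ} (Φ : Matrix (Fin M) (Fin N) ℝ) (K : ℕ) (δ : ℝ) : Prop :=
  ∀ x : Fin N → ℝ, (Finset.univ.filter fun i => x i ≠ 0).card ≤ K →
    (1 - δ) * (∑ j, x j ^ 2) ≤ (∑ i, (Φ.mulVec x i) ^ 2) ∧
    (∑ i, (Φ.mulVec x i) ^ 2) ≤ (1 + δ) * (∑ j, x j ^ 2)

open Finset Matrix

set_option maxHeartbeats 1600000 in
lemma gram_core {m k : ℕ} (Bz : Matrix (Fin m) (Fin (k+1)) ℤ)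
    (hli : ∀ z : Fin (k+1) → ℝ,
      (Bz.map (Int.cast : ℤ → ℝ)) *ᵥ z = 0 → z = 0)
    (Q : ℝ)
    (hQ : ∀ a b, |((Bz.map (Int.cast : ℤ → ℝ))ᵀ * Bz.map (Int.cast : ℤ → ℝ)) a b| ≤ Q)
    (y : Fin (k+1) → ℝ) :
    ∑ a, y a ^ 2 ≤ ((k+1).factorial : ℝ) * Q ^ k *
      ∑ i, ((Bz.map (Int.cast : ℤ → ℝ)) *ᵥ y) i ^ 2 := by
  set A : Matrix (Fin m) (Fin (k+1)) ℝ := Bz.map (Int.cast : ℤ → ℝ) with hA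
  set G : Matrix (Fin (k+1)) (Fin (k+1)) ℝ := Aᵀ * A with hG
  have hQ0 : 0 ≤ Q := le_trans (abs_nonneg _) (hQ 0 0)
  -- quadratic form identity
  have quad : ∀ u v : Fin (k+1) → ℝ, (A *ᵥ u) ⬝ᵥ (A *ᵥ v) = u ⬝ᵥ (G *ᵥ v) := by
    intro u v
    rw [hG, ← Matrix.mulVec_mulVec, Matrix.dotProduct_mulVec u, Matrix.vecMul_transpose]
  -- positive definiteness
  have hpd : G.PosDef := by
    refine Matrix.posDef_iff_dotProduct_mulVec.mpr ⟨?_, ?_⟩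
    · show Gᴴ = G
      ext a b
      simp [Matrix.conjTranspose_apply, hG, Matrix.mul_apply, mul_comm]
    · intro z hz
      have hAz : A *ᵥ z ≠ 0 := fun h => hz (hli z h)
      have h1 : star z ⬝ᵥ (G *ᵥ z) = ∑ i, (A *ᵥ z) i ^ 2 := by
        rw [star_trivial, ← quad]
        simp [dotProduct, sq]
      rw [h1]
      obtain ⟨i, hi⟩ := Function.ne_iff.mp hAz
      exact Finset.sum_pos' (fun j _ => sq_nonneg _)
        ⟨i, Finset.mem_univ i, by rw [← sq_abs]; exact pow_pos (abs_pos.mpr hi) 2⟩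
  -- determinant at least 1
  have hGmap : G = ((Bz)ᵀ * Bz).map (Int.cast : ℤ → ℝ) := by
    ext a b
    simp only [hG, hA, Matrix.mul_apply, Matrix.map_apply, Matrix.transpose_apply]
    push_cast
    rfl
  have hdet_int : G.det = (((Bz)ᵀ * Bz).det : ℝ) := by
    have h := RingHom.map_det (Int.castRingHom ℝ) ((Bz)ᵀ * Bz)
    rw [hGmap]
    simpa [RingHom.mapMatrix_apply] using h.symm
  have hdet1 : 1 ≤ G.det := by
    have h0 : (0 : ℝ) < (((Bz)ᵀ * Bz).det : ℝ) := hdet_int ▸ hpd.det_pos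
    have : 0 < ((Bz)ᵀ * Bz).det := by exact_mod_cast h0
    rw [hdet_int]
    exact_mod_cast this
  -- adjugate entry bound
  have hadj : ∀ a b, |G.adjugate a b| ≤ (k.factorial : ℝ) * Q ^ k := by
    intro a b
    rw [Matrix.adjugate_fin_succ_eq_det_submatrix]
    rw [abs_mul, abs_pow, abs_neg, abs_one, one_pow, one_mul]
    have := Matrix.det_le (A := G.submatrix b.succAbove a.succAbove)
      (abv := AbsoluteValue.abs) (x := Q) (fun i j => hQ _ _)
    simpa [nsmul_eq_mul] using this
  -- notation
  set T := ∑ a, y a ^ 2 with hT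
  set S := ∑ i, (A *ᵥ y) i ^ 2 with hS
  set v : Fin (k+1) → ℝ := G.adjugate *ᵥ y with hv
  set d := G.det with hd
  set Bd : ℝ := (k.factorial : ℝ) * Q ^ k with hBd
  have hBd0 : 0 ≤ Bd := by positivity
  have hT0 : 0 ≤ T := Finset.sum_nonneg fun a _ => sq_nonneg _
  have hS0 : 0 ≤ S := Finset.sum_nonneg fun i _ => sq_nonneg _
  have hd1 : 1 ≤ d := hdet1
  have hGv : G *ᵥ v = d • y := by
    rw [hv, Matrix.mulVec_mulVec, Matrix.mul_adjugate, Matrix.smul_mulVec,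
      Matrix.one_mulVec]
  have hyy : y ⬝ᵥ y = T := by simp [hT, dotProduct, sq]
  have hinner : (A *ᵥ y) ⬝ᵥ (A *ᵥ v) = d * T := by
    rw [quad, hGv, dotProduct_smul, smul_eq_mul, hyy]
  -- bound on y ⬝ᵥ v
  have hyv : y ⬝ᵥ v ≤ Bd * (((k:ℝ)+1) * T) := by
    have habs : ∀ a, |v a| ≤ Bd * ∑ b, |y b| := by
      intro a
      have : v a = ∑ b, G.adjugate a b * y b := by
        simp [hv, Matrix.mulVec, dotProduct]
      rw [this]
      refine le_trans (Finset.abs_sum_le_sum_abs _ _) ?_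
      rw [Finset.mul_sum]
      refine Finset.sum_le_sum fun b _ => ?_
      rw [abs_mul]
      exact mul_le_mul_of_nonneg_right (hadj a b) (abs_nonneg _)
    have h1 : y ⬝ᵥ v ≤ ∑ a, |y a| * (Bd * ∑ b, |y b|) := by
      refine le_trans (le_abs_self _) (le_trans (Finset.abs_sum_le_sum_abs _ _)
        (Finset.sum_le_sum fun a _ => ?_))
      rw [abs_mul]
      exact mul_le_mul_of_nonneg_left (habs a) (abs_nonneg _)
    have h2 : ∑ a, |y a| * (Bd * ∑ b, |y b|) = Bd * (∑ a, |y a|) ^ 2 := by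
      rw [← Finset.sum_mul]
      ring
    have h3 : (∑ a, |y a|) ^ 2 ≤ ((k:ℝ)+1) * T := by
      have := sq_sum_le_card_mul_sum_sq (s := (Finset.univ : Finset (Fin (k+1))))
        (f := fun a => |y a|)
      simp only [sq_abs, Finset.card_univ, Fintype.card_fin] at this
      rw [hT]
      convert this using 2
      · rfl
      push_cast
      ring
    calc y ⬝ᵥ v ≤ Bd * (∑ a, |y a|) ^ 2 := by rw [← h2]; exact h1
      _ ≤ Bd * (((k:ℝ)+1) * T) := mul_le_mul_of_nonneg_left h3 hBd0
  have hSv : (A *ᵥ v) ⬝ᵥ (A *ᵥ v) = d * (y ⬝ᵥ v) := by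
    rw [quad, hGv, dotProduct_smul, smul_eq_mul, dotProduct_comm]
  -- Cauchy-Schwarz
  have hcs : ((A *ᵥ y) ⬝ᵥ (A *ᵥ v)) ^ 2 ≤ S * ((A *ᵥ v) ⬝ᵥ (A *ᵥ v)) := by
    have h := Finset.sum_mul_sq_le_sq_mul_sq Finset.univ
      (fun i => (A *ᵥ y) i) (fun i => (A *ᵥ v) i)
    have e1 : (A *ᵥ y) ⬝ᵥ (A *ᵥ v) = ∑ i, (A *ᵥ y) i * (A *ᵥ v) i := rfl
    have e2 : (A *ᵥ v) ⬝ᵥ (A *ᵥ v) = ∑ i, (A *ᵥ v) i ^ 2 := by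
      simp [dotProduct, sq]
    rw [e1, e2, hS]
    exact h
  -- combine
  have hkey : (d * T) ^ 2 ≤ S * (d * (Bd * (((k:ℝ)+1) * T))) := by
    rw [← hinner]
    refine le_trans hcs ?_
    rw [hSv]
    have hdp : 0 ≤ d := le_trans zero_le_one hd1
    nlinarith [hyv, hS0, hdp, mul_le_mul_of_nonneg_left hyv hdp]
  have hfac : ((k+1).factorial : ℝ) * Q ^ k = ((k:ℝ)+1) * Bd := by
    rw [Nat.factorial_succ, hBd]
    push_cast
    ring
  rw [hfac]
  rcases eq_or_lt_of_le hT0 with h0 | hTpos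
  · rw [← h0]
    have : (0:ℝ) ≤ ((k:ℝ)+1) := by positivity
    exact mul_nonneg (mul_nonneg this hBd0) hS0
  · have hu : 0 < d * T := mul_pos (lt_of_lt_of_le one_pos hd1) hTpos
    have h5 : (d*T)*(d*T) ≤ (((k:ℝ)+1) * Bd * S) * (d*T) := by nlinarith [hkey]
    have h6 : d * T ≤ ((k:ℝ)+1) * Bd * S := le_of_mul_le_mul_right h5 hu
    have h7 : T ≤ d * T := le_mul_of_one_le_left hT0 hd1
    linarith

lemma fact_succ_le_pow : ∀ k : ℕ, (k+1).factorial ≤ (k+1)^k := by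
  intro k
  induction k with
  | zero => simp
  | succ k ih =>
      calc (k+2).factorial = (k+2) * (k+1).factorial := rfl
        _ ≤ (k+2) * (k+1)^k := Nat.mul_le_mul_left _ ih
        _ ≤ (k+2) * (k+2)^k := Nat.mul_le_mul_left _ (Nat.pow_le_pow_left (by omega) k)
        _ = (k+2)^(k+1) := (pow_succ' _ _).symm



set_option maxHeartbeats 1600000 in
/-- If `Ψ` is an `M × N` integer matrix with `K ≤ M ≤ N`, entries bounded by `P ≥ 1`, every
`K` columns of `Ψ` are linearly independent, `C = 2^⌈log₂(√(MN)·P)⌉`, and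
`δ = 1 - 1/(C²·(K·M·P²)^(K-1))`, then `Φ = (1/C)Ψ` satisfies the `(K,δ)`-RIP. -/
theorem stmt_9 {M N : ℕ} (K : ℕ) (hKM : K ≤ M) (hMN : M ≤ N) (hK : 0 < K)
    (Ψ : Matrix (Fin M) (Fin N) ℤ) (P : ℤ) (hP1 : 1 ≤ P) (hP : ∀ i j, |Ψ i j| ≤ P)
    (hind : ∀ 𝒦 : Finset (Fin N), 𝒦.card = K →
      LinearIndependent ℝ (fun j : 𝒦 => fun i : Fin M => (Ψ i j : ℝ)))
    (C : ℝ) (hC : C = 2 ^ (⌈Real.logb 2 (Real.sqrt (M * N) * P)⌉ : ℤ))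
    (δ : ℝ) (hδ : δ = 1 - 1 / (C ^ 2 * ((K : ℝ) * M * (P : ℝ) ^ 2) ^ (K - 1))) :
    RIP (fun i j => (Ψ i j : ℝ) / C) K δ := by
  obtain ⟨k, rfl⟩ : ∃ k, K = k + 1 := ⟨K - 1, (Nat.succ_pred_eq_of_pos hK).symm⟩
  have hM1 : (1:ℝ) ≤ (M:ℝ) := by exact_mod_cast le_trans hK hKM
  have hN1n : 1 ≤ N := le_trans (le_trans hK hKM) hMN
  have hN1 : (1:ℝ) ≤ (N:ℝ) := by exact_mod_cast hN1n
  have hP1' : (1:ℝ) ≤ (P:ℝ) := by exact_mod_cast hP1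
  -- bounds on C
  have hc1 : (1:ℝ) ≤ Real.sqrt ((M:ℝ) * (N:ℝ)) * (P:ℝ) := by
    have h1 : (1:ℝ) ≤ (M:ℝ) * (N:ℝ) := by nlinarith [hM1, hN1]
    have h2 : (1:ℝ) ≤ Real.sqrt ((M:ℝ)*(N:ℝ)) := by
      rw [show (1:ℝ) = Real.sqrt 1 from Real.sqrt_one.symm]
      exact Real.sqrt_le_sqrt h1
    calc (1:ℝ) = 1 * 1 := by ring
      _ ≤ Real.sqrt ((M:ℝ)*(N:ℝ)) * (P:ℝ) :=
        mul_le_mul h2 hP1' zero_le_one (by linarith)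
  have hCge : Real.sqrt ((M:ℝ) * (N:ℝ)) * (P:ℝ) ≤ C := by
    rw [hC]
    set c : ℝ := Real.sqrt ((M:ℝ) * (N:ℝ)) * (P:ℝ) with hc
    have hcpos : 0 < c := lt_of_lt_of_le one_pos hc1
    calc c = 2 ^ Real.logb 2 c := (Real.rpow_logb (by norm_num) (by norm_num) hcpos).symm
      _ ≤ 2 ^ ((⌈Real.logb 2 c⌉ : ℤ) : ℝ) := by
          rw [Real.rpow_le_rpow_left_iff (by norm_num : (1:ℝ) < 2)]
          exact Int.le_ceil _
      _ = 2 ^ (⌈Real.logb 2 c⌉ : ℤ) := Real.rpow_intCast 2 _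
  have hC1 : (1:ℝ) ≤ C := le_trans hc1 hCge
  have hC0 : (0:ℝ) < C := lt_of_lt_of_le one_pos hC1
  have hC2 : (M:ℝ) * (N:ℝ) * (P:ℝ)^2 ≤ C^2 := by
    have hcn : (0:ℝ) ≤ Real.sqrt ((M:ℝ) * (N:ℝ)) * (P:ℝ) := by linarith
    have h := mul_le_mul hCge hCge hcn (le_trans hcn hCge)
    have hs : Real.sqrt ((M:ℝ)*(N:ℝ)) * Real.sqrt ((M:ℝ)*(N:ℝ)) = (M:ℝ)*(N:ℝ) :=
      Real.mul_self_sqrt (by positivity)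
    nlinarith [hs]
  -- the 1-δ value
  have hδ' : 1 - δ = 1 / (C^2 * (((k:ℝ)+1) * (M:ℝ) * (P:ℝ)^2) ^ k) := by
    rw [hδ]
    push_cast [Nat.add_sub_cancel]
    ring
  have hk0 : (0:ℝ) ≤ (k:ℝ) := Nat.cast_nonneg k
  have hP2 : (1:ℝ) ≤ (P:ℝ)^2 := by nlinarith [hP1']
  have hMP : (1:ℝ) ≤ (M:ℝ)*(P:ℝ)^2 := by nlinarith [hM1, hP2]
  have hTk1 : (1:ℝ) ≤ (((k:ℝ)+1) * (M:ℝ) * (P:ℝ)^2) ^ k := by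
    apply one_le_pow₀
    nlinarith [hMP, hk0]
  have hTkpos : (0:ℝ) < (((k:ℝ)+1) * (M:ℝ) * (P:ℝ)^2) ^ k := lt_of_lt_of_le one_pos hTk1
  have hδ0 : 0 ≤ δ := by
    have h1 : 1 / (C^2 * (((k:ℝ)+1) * (M:ℝ) * (P:ℝ)^2) ^ k) ≤ 1 := by
      rw [div_le_one (by positivity)]
      nlinarith [hC1, hTk1]
    linarith [hδ']
  intro x hx
  -- choose the support superset
  obtain ⟨𝒦, hs𝒦, -, h𝒦card⟩ := Finset.exists_subsuperset_card_eq
    (Finset.subset_univ (Finset.univ.filter fun j => x j ≠ 0)) hx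
    (by rw [Finset.card_univ, Fintype.card_fin]; exact le_trans hKM hMN)
  have hcard' : Fintype.card ↥𝒦 = k+1 := by rw [Fintype.card_coe]; exact h𝒦card
  set ε : ↥𝒦 ≃ Fin (k+1) := Fintype.equivFinOfCardEq hcard' with hε
  set e : Fin (k+1) → Fin N := fun a => ((ε.symm a : ↥𝒦) : Fin N) with he
  have hx0 : ∀ j, j ∉ 𝒦 → x j = 0 := by
    intro j hj
    by_contra h
    exact hj (hs𝒦 (Finset.mem_filter.mpr ⟨Finset.mem_univ _, h⟩))
  have hsum : ∀ f : Fin N → ℝ, (∀ j, j ∉ 𝒦 → f j = 0) → ∑ j, f j = ∑ a, f (e a) := by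
    intro f hf
    rw [← Finset.sum_subset (Finset.subset_univ 𝒦) (fun j _ hj => hf j hj)]
    rw [← Finset.sum_coe_sort 𝒦 f]
    exact (Equiv.sum_comp ε.symm (fun j : ↥𝒦 => f ↑j)).symm
  set y : Fin (k+1) → ℝ := fun a => x (e a) with hy
  set Bz : Matrix (Fin M) (Fin (k+1)) ℤ := fun i a => Ψ i (e a) with hBzdef
  set A : Matrix (Fin M) (Fin (k+1)) ℝ := Bz.map (Int.cast : ℤ → ℝ) with hAdef
  have hAe : ∀ i a, A i a = ((Ψ i (e a) : ℤ) : ℝ) := fun i a => rfl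
  have hAx : ∀ i, ∑ j, (Ψ i j : ℝ) * x j = (A *ᵥ y) i := by
    intro i
    rw [hsum (fun j => (Ψ i j:ℝ) * x j) (fun j hj => by show (Ψ i j:ℝ) * x j = 0; rw [hx0 j hj, mul_zero])]
    simp [Matrix.mulVec, dotProduct, hAe, hy]
  have hxy : ∑ j, x j ^ 2 = ∑ a, y a ^ 2 :=
    hsum (fun j => x j ^ 2) (fun j hj => by show x j ^ 2 = 0; rw [hx0 j hj]; ring)
  have hΦsq : ∑ i, (Matrix.mulVec (fun i j => (Ψ i j:ℝ)/C) x) i ^ 2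
      = (∑ i, (A *ᵥ y) i ^ 2) / C^2 := by
    rw [Finset.sum_div]
    refine Finset.sum_congr rfl fun i _ => ?_
    have h1 : (Matrix.mulVec (fun i j => (Ψ i j:ℝ)/C) x) i = (∑ j, (Ψ i j : ℝ) * x j) / C := by
      simp [Matrix.mulVec, dotProduct, div_mul_eq_mul_div, Finset.sum_div]
    rw [h1, hAx i, div_pow]
  -- entry bounds
  have hPentry : ∀ i a, |A i a| ≤ (P:ℝ) := by
    intro i a
    rw [hAe, ← Int.cast_abs]
    exact_mod_cast hP i (e a)
  have hQbound : ∀ a b, |(Aᵀ * A) a b| ≤ (M:ℝ) * (P:ℝ)^2 := by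
    intro a b
    rw [Matrix.mul_apply]
    refine le_trans (Finset.abs_sum_le_sum_abs _ _) ?_
    calc ∑ i, |Aᵀ a i * A i b| ≤ ∑ _i : Fin M, (P:ℝ) * (P:ℝ) := by
          refine Finset.sum_le_sum fun i _ => ?_
          rw [abs_mul]
          exact mul_le_mul (hPentry i a) (hPentry i b) (abs_nonneg _) (by linarith)
      _ = (M:ℝ) * (P:ℝ)^2 := by
          rw [Finset.sum_const, Finset.card_univ, Fintype.card_fin, nsmul_eq_mul]
          ring
  -- linear independence
  have hli : ∀ z : Fin (k+1) → ℝ, A *ᵥ z = 0 → z = 0 := by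
    intro z hz
    have hLI := Fintype.linearIndependent_iff.mp (hind 𝒦 h𝒦card)
    have h0 : ∑ j : ↥𝒦, z (ε j) • (fun i : Fin M => (Ψ i j : ℝ)) = 0 := by
      have hre : ∑ j : ↥𝒦, z (ε j) • (fun i : Fin M => ((Ψ i j : ℤ) : ℝ))
          = ∑ a, z a • (fun i : Fin M => ((Ψ i (e a) : ℤ) : ℝ)) := by
        rw [← Equiv.sum_comp ε.symm
          (fun j : ↥𝒦 => z (ε j) • (fun i : Fin M => ((Ψ i j : ℤ) : ℝ)))]
        simp [he]
      rw [hre]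
      funext i
      have := congrFun hz i
      simp only [Matrix.mulVec, dotProduct, Pi.zero_apply] at this ⊢
      rw [Finset.sum_apply]
      simp only [Pi.smul_apply, smul_eq_mul]
      rw [← this]
      exact Finset.sum_congr rfl fun a _ => by rw [hAe, mul_comm]
    funext a
    have := hLI (fun j => z (ε j)) h0 (ε.symm a)
    simpa using this
  -- core bound
  have hcore := gram_core Bz hli ((M:ℝ)*(P:ℝ)^2) hQbound y
  set S : ℝ := ∑ i, (A *ᵥ y) i ^ 2 with hSdef
  have hS0 : 0 ≤ S := Finset.sum_nonneg fun i _ => sq_nonneg _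
  have hy0 : 0 ≤ ∑ a, y a ^ 2 := Finset.sum_nonneg fun a _ => sq_nonneg _
  constructor
  · -- lower bound
    rw [hδ', hxy, hΦsq]
    have hfacpow : ((k+1).factorial : ℝ) * ((M:ℝ)*(P:ℝ)^2)^k
        ≤ (((k:ℝ)+1) * (M:ℝ) * (P:ℝ)^2) ^ k := by
      have h1 : ((k+1).factorial : ℝ) ≤ ((k:ℝ)+1)^k := by
        have := fact_succ_le_pow k
        have h2 : (((k+1).factorial : ℕ) : ℝ) ≤ (((k+1)^k : ℕ) : ℝ) := by exact_mod_cast this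
        calc ((k+1).factorial : ℝ) = (((k+1).factorial : ℕ) : ℝ) := by norm_cast
          _ ≤ (((k+1)^k : ℕ) : ℝ) := h2
          _ = ((k:ℝ)+1)^k := by push_cast; ring
      calc ((k+1).factorial : ℝ) * ((M:ℝ)*(P:ℝ)^2)^k
          ≤ ((k:ℝ)+1)^k * ((M:ℝ)*(P:ℝ)^2)^k :=
            mul_le_mul_of_nonneg_right h1 (by positivity)
        _ = (((k:ℝ)+1) * ((M:ℝ)*(P:ℝ)^2)) ^ k := (mul_pow _ _ _).symm
        _ = (((k:ℝ)+1) * (M:ℝ) * (P:ℝ)^2) ^ k := by ring_nf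
    have hyS : ∑ a, y a ^ 2 ≤ (((k:ℝ)+1) * (M:ℝ) * (P:ℝ)^2) ^ k * S :=
      le_trans hcore (mul_le_mul_of_nonneg_right hfacpow hS0)
    rw [div_mul_eq_mul_div, one_mul, div_le_div_iff₀ (by positivity) (by positivity)]
    calc (∑ a, y a ^ 2) * C^2 ≤ ((((k:ℝ)+1) * (M:ℝ) * (P:ℝ)^2) ^ k * S) * C^2 :=
          mul_le_mul_of_nonneg_right hyS (by positivity)
      _ = S * (C^2 * (((k:ℝ)+1) * (M:ℝ) * (P:ℝ)^2) ^ k) := by ring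
  · -- upper bound
    rw [hxy, hΦsq]
    have hib : ∀ i : Fin M, (A *ᵥ y) i ^ 2 ≤ ((k:ℝ)+1) * (P:ℝ)^2 * ∑ a, y a ^ 2 := by
      intro i
      have h1 : (A *ᵥ y) i = ∑ a, A i a * y a := rfl
      rw [h1]
      have h2 := sq_sum_le_card_mul_sum_sq (s := (Finset.univ : Finset (Fin (k+1))))
        (f := fun a => A i a * y a)
      simp only [Finset.card_univ, Fintype.card_fin] at h2
      have h3 : ∑ a, (A i a * y a)^2 ≤ (P:ℝ)^2 * ∑ a, y a ^ 2 := by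
        rw [Finset.mul_sum]
        refine Finset.sum_le_sum fun a _ => ?_
        rw [mul_pow]
        refine mul_le_mul_of_nonneg_right ?_ (sq_nonneg _)
        calc A i a ^ 2 = |A i a| ^ 2 := (sq_abs _).symm
          _ ≤ (P:ℝ)^2 := pow_le_pow_left₀ (abs_nonneg _) (hPentry i a) 2
      calc (∑ a, A i a * y a) ^ 2 ≤ ((k+1 : ℕ):ℝ) * ∑ a, (A i a * y a)^2 := h2
        _ ≤ ((k+1:ℕ):ℝ) * ((P:ℝ)^2 * ∑ a, y a ^ 2) := by
            refine mul_le_mul_of_nonneg_left h3 (by positivity)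
        _ = ((k:ℝ)+1) * (P:ℝ)^2 * ∑ a, y a ^ 2 := by push_cast; ring
    have hup : S ≤ C^2 * ∑ a, y a ^ 2 := by
      have h4 : S ≤ (M:ℝ) * (((k:ℝ)+1) * (P:ℝ)^2 * ∑ a, y a ^ 2) := by
        calc S ≤ ∑ _i : Fin M, (((k:ℝ)+1) * (P:ℝ)^2 * ∑ a, y a ^ 2) :=
              Finset.sum_le_sum fun i _ => hib i
          _ = (M:ℝ) * (((k:ℝ)+1) * (P:ℝ)^2 * ∑ a, y a ^ 2) := by
              rw [Finset.sum_const, Finset.card_univ, Fintype.card_fin, nsmul_eq_mul]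
      have hkN : ((k:ℝ)+1) ≤ (N:ℝ) := by
        have : k+1 ≤ N := le_trans hKM hMN
        exact_mod_cast this
      have h6 : (0:ℝ) ≤ ((N:ℝ) - ((k:ℝ)+1)) * ((M:ℝ) * (P:ℝ)^2) :=
        mul_nonneg (sub_nonneg.mpr hkN) (by positivity)
      nlinarith [h4, mul_nonneg h6 hy0, mul_le_mul_of_nonneg_right hC2 hy0]
    have h5 : S / C^2 ≤ ∑ a, y a ^ 2 := by
      rw [div_le_iff₀ (by positivity)]
      nlinarith [hup]
    nlinarith [hy0, hδ0, h5]
end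

section
/- Let Ψ be an M×N integer matrix with entries bounded in absolute value by P, K ≤ M ≤ N, and C = 2^{⌈log₂(√(MN)·P)⌉}, Φ = (1/C)Ψ, δ = 1 − 1/(C²·(KMP²)^{K−1}). Then: Φ is (K,δ)-RIP if and only if Spark(Ψ) > K. -/
open Matrix Finset in
lemma quad_lower {n : Type*} [Fintype n] [DecidableEq n] [Nonempty n]
    {G : Matrix n n ℝ} (hG : G.PosDef) {t : ℝ} (htr : G.trace ≤ t) (hdet : 1 ≤ G.det)
    (x : n → ℝ) :
    (1 / t ^ (Fintype.card n - 1)) * ∑ i, x i ^ 2 ≤ x ⬝ᵥ G *ᵥ x := by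
  have hH := hG.isHermitian
  set lam := hH.eigenvalues with hlam
  have hpos : ∀ i, 0 < lam i := hG.eigenvalues_pos
  have hprod : ∏ i, lam i = G.det := by
    have := hH.det_eq_prod_eigenvalues
    exact_mod_cast this.symm
  have hsum : ∑ i, lam i = G.trace := by
    conv_rhs => rw [hH.spectral_theorem, Unitary.conjStarAlgAut_apply]
    rw [Matrix.trace_mul_cycle, Unitary.coe_star_mul_self, Matrix.one_mul]
    simp [Matrix.trace_diagonal, hlam]
  have hlt : ∀ i, lam i ≤ t := by
    intro i
    refine le_trans ?_ (hsum ▸ htr)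
    exact Finset.single_le_sum (fun j _ => (hpos j).le) (Finset.mem_univ i)
  have ht0 : 0 < t := lt_of_lt_of_le (hpos (Classical.arbitrary n)) (hlt _)
  have key : ∀ i, 1 / t ^ (Fintype.card n - 1) ≤ lam i := by
    intro i
    have h1 : (1:ℝ) ≤ lam i * ∏ j ∈ Finset.univ.erase i, lam j := by
      rw [Finset.mul_prod_erase _ _ (Finset.mem_univ i), hprod]; exact hdet
    have h2 : ∏ j ∈ Finset.univ.erase i, lam j ≤ t ^ (Fintype.card n - 1) := by
      calc ∏ j ∈ Finset.univ.erase i, lam j ≤ ∏ j ∈ Finset.univ.erase i, t :=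
            Finset.prod_le_prod (fun j _ => (hpos j).le) (fun j _ => hlt j)
        _ = t ^ (Fintype.card n - 1) := by
            rw [Finset.prod_const, Finset.card_erase_of_mem (Finset.mem_univ i),
              Finset.card_univ]
    rw [div_le_iff₀ (by positivity)]
    calc (1:ℝ) ≤ lam i * ∏ j ∈ Finset.univ.erase i, lam j := h1
      _ ≤ lam i * t ^ (Fintype.card n - 1) := by
          exact mul_le_mul_of_nonneg_left h2 (hpos i).le
  -- spectral decomposition of the quadratic form
  set U : Matrix n n ℝ := (hH.eigenvectorUnitary : Matrix n n ℝ) with hU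
  set y : n → ℝ := Uᵀ *ᵥ x with hy
  have hstar : star U = Uᵀ := by
    rw [Matrix.star_eq_conjTranspose, Matrix.conjTranspose_eq_transpose_of_trivial]
  have hquad : x ⬝ᵥ G *ᵥ x = ∑ i, lam i * y i ^ 2 := by
    conv_lhs => rw [hH.spectral_theorem, Unitary.conjStarAlgAut_apply]
    rw [Matrix.mul_assoc, ← Matrix.mulVec_mulVec, Matrix.dotProduct_mulVec,
      ← Matrix.mulVec_transpose, ← Matrix.mulVec_mulVec, hstar]
    simp only [← hU, ← hy, dotProduct, Matrix.mulVec_diagonal]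
    refine Finset.sum_congr rfl fun i _ => ?_
    simp [RCLike.ofReal]
    ring
  have hnorm : ∑ i, y i ^ 2 = ∑ i, x i ^ 2 := by
    have h1 : y ⬝ᵥ y = x ⬝ᵥ x := by
      rw [hy, Matrix.dotProduct_mulVec, ← Matrix.mulVec_transpose, Matrix.mulVec_mulVec]
      have : U * Uᵀ = 1 := by rw [← hstar]; exact Unitary.coe_mul_star_self _
      rw [Matrix.transpose_transpose, this, Matrix.one_mulVec]
    simpa [dotProduct, sq] using h1
  rw [hquad, ← hnorm, Finset.mul_sum]
  exact Finset.sum_le_sum fun i _ => by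
    have := key i
    nlinarith [sq_nonneg (y i), hpos i]

open Matrix Finset in
lemma sparse_lower {M N : ℕ} (K : ℕ) (hK : 0 < K) (hKM : K ≤ M)
    (Ψ : Matrix (Fin M) (Fin N) ℤ) (P : ℤ) (hP1 : 1 ≤ P) (hP : ∀ i j, |Ψ i j| ≤ P)
    (hspark : ∀ x : Fin N → ℝ, x ≠ 0 → (Ψ.map (Int.cast : ℤ → ℝ)).mulVec x = 0 →
        K < (Finset.univ.filter fun i => x i ≠ 0).card)
    (x : Fin N → ℝ) (hx : (Finset.univ.filter fun i => x i ≠ 0).card ≤ K) :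
    (1 / ((K : ℝ) * M * (P:ℝ) ^ 2) ^ (K - 1)) * ∑ j, x j ^ 2 ≤
      ∑ i, ((Ψ.map (Int.cast : ℤ → ℝ)).mulVec x i) ^ 2 := by
  classical
  by_cases hx0 : x = 0
  · simp [hx0, Matrix.mulVec_zero]
  set S : Finset (Fin N) := Finset.univ.filter fun i => x i ≠ 0 with hS
  have hxS : ∀ j, j ∉ S → x j = 0 := by
    intro j hj
    by_contra h
    exact hj (Finset.mem_filter.mpr ⟨Finset.mem_univ j, h⟩)
  have hSne : Nonempty {j // j ∈ S} := by
    obtain ⟨j, hj⟩ := Function.ne_iff.mp hx0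
    refine ⟨⟨j, Finset.mem_filter.mpr ⟨Finset.mem_univ j, ?_⟩⟩⟩
    simpa using hj
  -- the submatrix on columns S
  set A : Matrix (Fin M) {j // j ∈ S} ℝ := fun i j => ((Ψ i j.1 : ℤ) : ℝ) with hA
  -- restriction identity
  have hres : ∀ z : Fin N → ℝ, (∀ j, j ∉ S → z j = 0) →
      (Ψ.map (Int.cast : ℤ → ℝ)).mulVec z = A.mulVec (fun j => z j.1) := by
    intro z hz
    funext i
    rw [Matrix.mulVec, Matrix.mulVec, dotProduct, dotProduct]
    rw [← Finset.sum_subset (Finset.subset_univ S) (fun j _ hj => by simp [hz j hj])]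
    rw [← Finset.sum_attach S (fun j => Ψ.map (Int.cast : ℤ → ℝ) i j * z j)]
    rfl
  set z : {j // j ∈ S} → ℝ := fun j => x j.1 with hz
  have hmain : (Ψ.map (Int.cast : ℤ → ℝ)).mulVec x = A.mulVec z := hres x hxS
  -- Gram matrix
  set Gz : Matrix {j // j ∈ S} {j // j ∈ S} ℤ :=
    (fun j k => ∑ i, Ψ i j.1 * Ψ i k.1) with hGz
  set G : Matrix {j // j ∈ S} {j // j ∈ S} ℝ := Aᵀ * A with hG
  have hGcast : G = Gz.map (Int.cast : ℤ → ℝ) := by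
    funext j k
    rw [hG, Matrix.mul_apply]; simp only [Matrix.transpose_apply, Matrix.map_apply]; simp [hGz, hA]
  -- quadratic form = norm of A z
  have hform : ∀ w : {j // j ∈ S} → ℝ, w ⬝ᵥ G *ᵥ w = ∑ i, (A.mulVec w i) ^ 2 := by
    intro w
    rw [hG, ← Matrix.mulVec_mulVec, Matrix.dotProduct_mulVec, ← Matrix.mulVec_transpose,
      Matrix.transpose_transpose]
    simp [dotProduct, sq]
  -- A has independent columns by spark
  have hAinj : ∀ w : {j // j ∈ S} → ℝ, w ≠ 0 → A.mulVec w ≠ 0 := by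
    intro w hw habs
    set x' : Fin N → ℝ := fun j => if h : j ∈ S then w ⟨j, h⟩ else 0 with hx'
    have hx'S : ∀ j, j ∉ S → x' j = 0 := fun j hj => by simp [hx', hj]
    have hx'ne : x' ≠ 0 := by
      obtain ⟨j, hj⟩ := Function.ne_iff.mp hw
      intro h
      apply hj
      have := congrFun h j.1
      simpa [hx', j.2] using this
    have hnull : (Ψ.map (Int.cast : ℤ → ℝ)).mulVec x' = 0 := by
      rw [hres x' hx'S]
      convert habs using 2
      funext j
      simp [hx', j.2]
    have hcard : (Finset.univ.filter fun i => x' i ≠ 0).card ≤ K := by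
      refine le_trans (Finset.card_le_card ?_) hx
      intro j hj
      simp only [Finset.mem_filter, Finset.mem_univ, true_and] at hj ⊢
      by_contra h
      exact hj (hx'S j h)
    exact absurd (hspark x' hx'ne hnull) (not_lt.mpr hcard)
  -- positive definiteness
  have hPD : G.PosDef := by
    refine Matrix.PosDef.of_dotProduct_mulVec_pos ?_ ?_
    · rw [hG, ← Matrix.conjTranspose_eq_transpose_of_trivial]
      exact Matrix.isHermitian_conjTranspose_mul_self A
    · intro w hw
      rw [star_trivial, hform w]
      obtain ⟨i, hi⟩ := Function.ne_iff.mp (hAinj w hw)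
      refine Finset.sum_pos' (fun i _ => sq_nonneg _) ⟨i, Finset.mem_univ i, ?_⟩
      have : (A *ᵥ w) i ≠ 0 := by simpa using hi
      positivity
  -- determinant at least one
  have hdet : (1:ℝ) ≤ G.det := by
    have h1 : G.det = ((Gz.det : ℤ) : ℝ) := by
      rw [hGcast]
      exact ((Int.castRingHom ℝ).map_det Gz).symm
    have h2 : (0:ℝ) < ((Gz.det : ℤ) : ℝ) := h1 ▸ hPD.det_pos
    have h3 : (0:ℤ) < Gz.det := by exact_mod_cast h2
    rw [h1]
    exact_mod_cast h3
  -- trace bound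
  set t : ℝ := (K : ℝ) * M * (P:ℝ) ^ 2 with ht
  have hPR : (1:ℝ) ≤ (P:ℝ) := by exact_mod_cast hP1
  have hM1 : (1:ℝ) ≤ (M:ℝ) := by
    have : (1:ℕ) ≤ M := le_trans hK hKM
    exact_mod_cast this
  have hK1 : (1:ℝ) ≤ (K:ℝ) := by exact_mod_cast hK
  have ht1 : (1:ℝ) ≤ t := by rw [ht]; nlinarith [sq_nonneg ((P:ℝ)-1), sq_nonneg ((P:ℝ)+1), mul_le_mul hK1 hM1 zero_le_one (by linarith : (0:ℝ) ≤ (K:ℝ))]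
  have htr : G.trace ≤ t := by
    have hdiag : ∀ j : {j // j ∈ S}, G j j ≤ (M:ℝ) * (P:ℝ)^2 := by
      intro j
      have : G j j = ∑ i, ((Ψ i j.1 : ℝ))^2 := by
        rw [hG, Matrix.mul_apply]; simp only [Matrix.transpose_apply]; simp [hA, sq]
      rw [this]
      calc ∑ i, ((Ψ i j.1 : ℝ))^2 ≤ ∑ _i : Fin M, (P:ℝ)^2 := by
            refine Finset.sum_le_sum fun i _ => ?_
            have h := hP i j.1
            have habs : |((Ψ i j.1 : ℤ) : ℝ)| ≤ (P:ℝ) := by exact_mod_cast h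
            calc ((Ψ i j.1 : ℝ))^2 = |((Ψ i j.1 : ℤ) : ℝ)|^2 := (sq_abs _).symm
              _ ≤ (P:ℝ)^2 := by
                  refine pow_le_pow_left₀ (abs_nonneg _) habs 2
        _ = (M:ℝ) * (P:ℝ)^2 := by simp [Finset.sum_const]
    have hcard : (Fintype.card {j // j ∈ S} : ℝ) ≤ (K:ℝ) := by
      rw [Fintype.card_coe]
      exact_mod_cast hx
    calc G.trace = ∑ j, G j j := rfl
      _ ≤ ∑ _j : {j // j ∈ S}, (M:ℝ) * (P:ℝ)^2 := Finset.sum_le_sum fun j _ => hdiag j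
      _ = (Fintype.card {j // j ∈ S} : ℝ) * ((M:ℝ) * (P:ℝ)^2) := by simp [Finset.sum_const]
      _ ≤ (K:ℝ) * ((M:ℝ) * (P:ℝ)^2) := by
          refine mul_le_mul_of_nonneg_right hcard (by positivity)
      _ = t := by rw [ht]; ring
  -- apply the eigenvalue bound
  have hql := quad_lower hPD htr hdet z
  rw [hform z, ← hmain] at hql
  have hsx : ∑ j, x j ^ 2 = ∑ j : {j // j ∈ S}, z j ^ 2 := by
    rw [← Finset.sum_subset (Finset.subset_univ S) (fun j _ hj => by
      rw [hxS j hj]; ring)]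
    rw [← Finset.sum_attach S (fun j => x j ^ 2)]
    rfl
  have hmono : 1 / t ^ (K - 1) ≤ 1 / t ^ (Fintype.card {j // j ∈ S} - 1) := by
    refine one_div_le_one_div_of_le (by positivity) ?_
    refine pow_le_pow_right₀ ht1 ?_
    have : Fintype.card {j // j ∈ S} ≤ K := by rw [Fintype.card_coe]; exact hx
    omega
  calc (1 / t ^ (K - 1)) * ∑ j, x j ^ 2
      ≤ (1 / t ^ (Fintype.card {j // j ∈ S} - 1)) * ∑ j, x j ^ 2 := by
        refine mul_le_mul_of_nonneg_right hmono (Finset.sum_nonneg fun j _ => sq_nonneg _)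
    _ = (1 / t ^ (Fintype.card {j // j ∈ S} - 1)) * ∑ j : {j // j ∈ S}, z j ^ 2 := by rw [hsx]
    _ ≤ ∑ i, ((Ψ.map (Int.cast : ℤ → ℝ)).mulVec x i) ^ 2 := hql

set_option maxHeartbeats 1000000 in
/-- With `Ψ` an `M × N` integer matrix, entries bounded by `P ≥ 1`, `K ≤ M ≤ N`,
`C = 2^⌈log₂(√(MN)·P)⌉`, `Φ = (1/C)Ψ`, `δ = 1 - 1/(C²·(K·M·P²)^(K-1))`:
`Φ` is `(K,δ)`-RIP iff `Spark(Ψ) > K` (every nonzero nullspace vector has more than `K`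
nonzero entries). -/
theorem stmt_10 {M N : ℕ} (K : ℕ) (hKM : K ≤ M) (hMN : M ≤ N) (hK : 0 < K)
    (Ψ : Matrix (Fin M) (Fin N) ℤ) (P : ℤ) (hP1 : 1 ≤ P) (hP : ∀ i j, |Ψ i j| ≤ P)
    (C : ℝ) (hC : C = 2 ^ (⌈Real.logb 2 (Real.sqrt (M * N) * P)⌉ : ℤ))
    (δ : ℝ) (hδ : δ = 1 - 1 / (C ^ 2 * ((K : ℝ) * M * (P : ℝ) ^ 2) ^ (K - 1))) :
    RIP (fun i j => (Ψ i j : ℝ) / C) K δ ↔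
      (∀ x : Fin N → ℝ, x ≠ 0 → (Ψ.map (Int.cast : ℤ → ℝ)).mulVec x = 0 →
        K < (Finset.univ.filter fun i => x i ≠ 0).card) := by
  have hM1 : 1 ≤ M := le_trans hK hKM
  have hN1 : 1 ≤ N := le_trans hM1 hMN
  have hPR : (1:ℝ) ≤ (P:ℝ) := by exact_mod_cast hP1
  have hMR : (1:ℝ) ≤ (M:ℝ) := by exact_mod_cast hM1
  have hNR : (1:ℝ) ≤ (N:ℝ) := by exact_mod_cast hN1
  have hKR : (1:ℝ) ≤ (K:ℝ) := by exact_mod_cast hK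
  set v : ℝ := Real.sqrt (M * N) * P with hv
  have hsq1 : (1:ℝ) ≤ Real.sqrt ((M:ℝ) * N) := Real.one_le_sqrt.mpr (by nlinarith)
  have hv1 : (1:ℝ) ≤ v := by rw [hv]; nlinarith
  have hvC : v ≤ C := by
    rw [hC]
    calc v = (2:ℝ) ^ (Real.logb 2 v) :=
          (Real.rpow_logb (by norm_num) (by norm_num) (by linarith)).symm
      _ ≤ (2:ℝ) ^ ((⌈Real.logb 2 v⌉ : ℤ) : ℝ) :=
          Real.rpow_le_rpow_of_exponent_le (by norm_num) (Int.le_ceil _)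
      _ = (2:ℝ) ^ (⌈Real.logb 2 v⌉ : ℤ) := Real.rpow_intCast 2 _
  have hC1 : (1:ℝ) ≤ C := le_trans hv1 hvC
  have hCpos : (0:ℝ) < C := by linarith
  set t : ℝ := (K : ℝ) * M * (P : ℝ) ^ 2 with ht
  have ht1 : (1:ℝ) ≤ t := by
    rw [ht]
    nlinarith [sq_nonneg ((P:ℝ)-1), sq_nonneg ((P:ℝ)+1),
      mul_le_mul hKR hMR zero_le_one (by linarith : (0:ℝ) ≤ (K:ℝ))]
  have htK1 : (1:ℝ) ≤ t ^ (K - 1) := one_le_pow₀ ht1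
  have hden1 : (1:ℝ) ≤ C ^ 2 * t ^ (K - 1) := by nlinarith
  have hεpos : 0 < 1 / (C ^ 2 * t ^ (K - 1)) := by positivity
  have hε1 : 1 / (C ^ 2 * t ^ (K - 1)) ≤ 1 := by
    rw [div_le_one (by linarith)]; exact hden1
  -- relation between Φ and Ψ
  have hΦsum : ∀ x : Fin N → ℝ,
      ∑ i, (Matrix.mulVec (fun i j => (Ψ i j : ℝ) / C) x i) ^ 2 =
        (1 / C ^ 2) * ∑ i, ((Ψ.map (Int.cast : ℤ → ℝ)).mulVec x i) ^ 2 := by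
    intro x
    rw [Finset.mul_sum]
    refine Finset.sum_congr rfl fun i _ => ?_
    have : Matrix.mulVec (fun i j => (Ψ i j : ℝ) / C) x i =
        (Ψ.map (Int.cast : ℤ → ℝ)).mulVec x i / C := by
      simp only [Matrix.mulVec, dotProduct, Matrix.map_apply, div_mul_eq_mul_div,
        Finset.sum_div]
    rw [this, div_pow]
    ring
  -- upper bound valid for all x
  have hupper : ∀ x : Fin N → ℝ,
      ∑ i, ((Ψ.map (Int.cast : ℤ → ℝ)).mulVec x i) ^ 2 ≤ C ^ 2 * ∑ j, x j ^ 2 := by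
    intro x
    have hrow : ∀ i, ((Ψ.map (Int.cast : ℤ → ℝ)).mulVec x i) ^ 2 ≤
        ((N:ℝ) * (P:ℝ) ^ 2) * ∑ j, x j ^ 2 := by
      intro i
      have hcs := Finset.sum_mul_sq_le_sq_mul_sq Finset.univ
        (fun j => ((Ψ i j : ℤ) : ℝ)) x
      have hrsum : ∑ j, ((Ψ i j : ℤ) : ℝ) ^ 2 ≤ (N:ℝ) * (P:ℝ) ^ 2 := by
        calc ∑ j, ((Ψ i j : ℤ) : ℝ) ^ 2 ≤ ∑ _j : Fin N, (P:ℝ) ^ 2 := by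
              refine Finset.sum_le_sum fun j _ => ?_
              have habs : |((Ψ i j : ℤ) : ℝ)| ≤ (P:ℝ) := by exact_mod_cast hP i j
              calc ((Ψ i j : ℤ) : ℝ) ^ 2 = |((Ψ i j : ℤ) : ℝ)| ^ 2 := (sq_abs _).symm
                _ ≤ (P:ℝ) ^ 2 := pow_le_pow_left₀ (abs_nonneg _) habs 2
          _ = (N:ℝ) * (P:ℝ) ^ 2 := by simp [Finset.sum_const]
      have hmv : (Ψ.map (Int.cast : ℤ → ℝ)).mulVec x i = ∑ j, ((Ψ i j : ℤ) : ℝ) * x j := rfl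
      rw [hmv]
      calc (∑ j, ((Ψ i j : ℤ) : ℝ) * x j) ^ 2
          ≤ (∑ j, ((Ψ i j : ℤ) : ℝ) ^ 2) * ∑ j, x j ^ 2 := hcs
        _ ≤ ((N:ℝ) * (P:ℝ) ^ 2) * ∑ j, x j ^ 2 := by
            refine mul_le_mul_of_nonneg_right hrsum (Finset.sum_nonneg fun j _ => sq_nonneg _)
    have hMNC : (M:ℝ) * ((N:ℝ) * (P:ℝ) ^ 2) ≤ C ^ 2 := by
      have hvsq : v ^ 2 = (M:ℝ) * (N:ℝ) * (P:ℝ) ^ 2 := by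
        rw [hv, mul_pow, Real.sq_sqrt (by positivity)]
      nlinarith [hvC, hv1]
    calc ∑ i, ((Ψ.map (Int.cast : ℤ → ℝ)).mulVec x i) ^ 2
        ≤ ∑ _i : Fin M, ((N:ℝ) * (P:ℝ) ^ 2) * ∑ j, x j ^ 2 :=
          Finset.sum_le_sum fun i _ => hrow i
      _ = (M:ℝ) * ((N:ℝ) * (P:ℝ) ^ 2) * ∑ j, x j ^ 2 := by
          simp [Finset.sum_const]; ring
      _ ≤ C ^ 2 * ∑ j, x j ^ 2 := by
          refine mul_le_mul_of_nonneg_right hMNC (Finset.sum_nonneg fun j _ => sq_nonneg _)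
  constructor
  · -- RIP → spark
    intro hRIP x hx0 hnull
    by_contra hcon
    push_neg at hcon
    obtain ⟨h1, -⟩ := hRIP x hcon
    have hsum0 : ∑ i, (Matrix.mulVec (fun i j => (Ψ i j : ℝ) / C) x i) ^ 2 = 0 := by
      rw [hΦsum x]
      simp only [hnull, Pi.zero_apply]
      simp
    rw [hsum0] at h1
    have hxpos : 0 < ∑ j, x j ^ 2 := by
      obtain ⟨j, hj⟩ := Function.ne_iff.mp hx0
      refine Finset.sum_pos' (fun j _ => sq_nonneg _) ⟨j, Finset.mem_univ j, ?_⟩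
      have : x j ≠ 0 := by simpa using hj
      positivity
    rw [hδ] at h1
    nlinarith
  · -- spark → RIP
    intro hspark x hx
    rw [hΦsum x, hδ]
    constructor
    · have hl := sparse_lower K hK hKM Ψ P hP1 hP hspark x hx
      rw [← ht] at hl
      have hsplit : 1 / (C ^ 2 * t ^ (K - 1)) = (1 / C ^ 2) * (1 / t ^ (K - 1)) :=
        (one_div_mul_one_div _ _).symm
      rw [sub_sub_cancel, hsplit, mul_assoc]
      exact mul_le_mul_of_nonneg_left hl (by positivity)
    · calc (1 / C ^ 2) * ∑ i, ((Ψ.map (Int.cast : ℤ → ℝ)).mulVec x i) ^ 2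
          ≤ (1 / C ^ 2) * (C ^ 2 * ∑ j, x j ^ 2) :=
            mul_le_mul_of_nonneg_left (hupper x) (by positivity)
        _ = ∑ j, x j ^ 2 := by
            rw [← mul_assoc, one_div, inv_mul_cancel₀ (by positivity : (C:ℝ) ^ 2 ≠ 0), one_mul]
        _ ≤ (1 + (1 - 1 / (C ^ 2 * t ^ (K - 1)))) * ∑ j, x j ^ 2 := by
            have hs : 0 ≤ ∑ j, x j ^ 2 := Finset.sum_nonneg fun j _ => sq_nonneg _
            nlinarith
end

section
/- Let A be a K×K real symmetric positive definite matrix with integer entries bounded in absolute value by B. Then λ_min(A) ≥ 1/(K·B)^{K−1}. -/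
/-- If `A` is a `K × K` symmetric positive definite matrix with integer entries bounded in
absolute value by `B`, then every eigenvalue (in particular the smallest) of `A` is at least
`1/(K·B)^(K-1)`. -/
theorem stmt_12 {K : ℕ} (A : Matrix (Fin K) (Fin K) ℤ) (B : ℤ)
    (hB : ∀ i j, |A i j| ≤ B) (hPD : (A.map (Int.cast : ℤ → ℝ)).PosDef) :
    ∀ i, 1 / ((K : ℝ) * B) ^ (K - 1) ≤ hPD.1.eigenvalues i := by
  intro i
  set M := A.map (Int.cast : ℤ → ℝ) with hMdef
  have hH := hPD.1
  have hpos : ∀ j, 0 < hH.eigenvalues j := hPD.eigenvalues_pos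
  -- diagonal entries are positive
  have hdiag : ∀ j, 0 < M j j := by
    intro j
    exact hPD.diag_pos
  -- B ≥ 1
  have hB1 : (1 : ℝ) ≤ (B : ℝ) := by
    have h0 : (0 : ℝ) < (A i i : ℝ) := by simpa [hMdef, Matrix.map_apply] using hdiag i
    have h1 : (0 : ℤ) < A i i := by exact_mod_cast h0
    have h2 : (1 : ℤ) ≤ B := le_trans h1 (le_trans (le_abs_self _) (hB i i))
    exact_mod_cast h2
  have hK1 : (1 : ℝ) ≤ (K : ℝ) := by
    have : 0 < K := i.pos
    exact_mod_cast this
  have hKB : (0 : ℝ) < (K : ℝ) * B := by nlinarith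
  have hKB1 : (1 : ℝ) ≤ (K : ℝ) * B := by nlinarith
  -- trace equals sum of eigenvalues
  have htrace : M.trace = ∑ j, hH.eigenvalues j := by
    simpa using hH.trace_eq_sum_eigenvalues
  -- eigenvalue upper bound
  have hle : ∀ j, hH.eigenvalues j ≤ (K : ℝ) * B := by
    intro j
    have h1 : hH.eigenvalues j ≤ ∑ k, hH.eigenvalues k :=
      Finset.single_le_sum (fun k _ => (hpos k).le) (Finset.mem_univ j)
    have h2 : M.trace ≤ (K : ℝ) * B := by
      rw [Matrix.trace]
      have : ∀ k : Fin K, M.diag k ≤ (B : ℝ) := by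
        intro k
        have := hB k k
        have : (A k k : ℝ) ≤ (B : ℝ) := by
          exact_mod_cast le_trans (le_abs_self _) this
        simpa [hMdef, Matrix.diag, Matrix.map_apply] using this
      calc ∑ k, M.diag k ≤ ∑ _k : Fin K, (B : ℝ) := Finset.sum_le_sum fun k _ => this k
        _ = (K : ℝ) * B := by simp [mul_comm]
    linarith [htrace ▸ h1]
  -- determinant ≥ 1
  have hdet : (1 : ℝ) ≤ M.det := by
    have hmap : M.det = ((A.det : ℤ) : ℝ) := by
      rw [hMdef]
      exact ((Int.castRingHom ℝ).map_det A).symm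
    have hdpos : 0 < M.det := hPD.det_pos
    have : (0 : ℤ) < A.det := by
      rw [hmap] at hdpos
      exact_mod_cast hdpos
    rw [hmap]
    exact_mod_cast this
  -- split the product
  have hprod : M.det = ∏ j, hH.eigenvalues j := by
    have := hH.det_eq_prod_eigenvalues
    simpa using this
  have hsplit : (∏ j, hH.eigenvalues j)
      = hH.eigenvalues i * ∏ j ∈ Finset.univ.erase i, hH.eigenvalues j :=
    (Finset.mul_prod_erase Finset.univ _ (Finset.mem_univ i)).symm
  have hrest : (∏ j ∈ Finset.univ.erase i, hH.eigenvalues j) ≤ ((K : ℝ) * B) ^ (K - 1) := by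
    calc (∏ j ∈ Finset.univ.erase i, hH.eigenvalues j)
        ≤ ∏ _j ∈ Finset.univ.erase i, ((K : ℝ) * B) :=
          Finset.prod_le_prod (fun j _ => (hpos j).le) (fun j _ => hle j)
      _ = ((K : ℝ) * B) ^ (Finset.univ.erase i).card := by rw [Finset.prod_const]
      _ = ((K : ℝ) * B) ^ (K - 1) := by
          rw [Finset.card_erase_of_mem (Finset.mem_univ i), Finset.card_univ, Fintype.card_fin]
  have hkey : (1 : ℝ) ≤ hH.eigenvalues i * ((K : ℝ) * B) ^ (K - 1) := by
    calc (1 : ℝ) ≤ M.det := hdet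
      _ = hH.eigenvalues i * ∏ j ∈ Finset.univ.erase i, hH.eigenvalues j := by
          rw [hprod, hsplit]
      _ ≤ hH.eigenvalues i * ((K : ℝ) * B) ^ (K - 1) :=
          mul_le_mul_of_nonneg_left hrest (hpos i).le
  have hpow : (0 : ℝ) < ((K : ℝ) * B) ^ (K - 1) := pow_pos hKB _
  rw [div_le_iff₀ hpow]
  exact hkey
end
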